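/- Let Z₁, …, Zₙ be i.i.d. N(0, 1/n) random variables and Z_max = max{Z₁, …, Zₙ}. Then for every ε with 0 < ε < 1, there is a constant C (depending on ε) with E[exp(Z_max²)] ≤ 1 + C n^{-(1-ε)} for all n sufficiently large. -/

import Mathlib

open MeasureTheory ProbabilityTheory Real Filter


lemma gauss_g_lintegral (n : ℕ) (hn : 4 ≤ n) (δ : ℝ) (hδ0 : 0 < δ) :
    ∫⁻ x, ENNReal.ofReal (if δ < x ^ 2 then Real.exp (x ^ 2) else 0)
        ∂(gaussianReal 0 ((1 : NNReal) / n))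
      ≤ ENNReal.ofReal (2 * n * Real.exp ((2 - n / 2) * δ)) := by
  have hn0 : (0 : ℝ) < n := by positivity
  have hv : ((1 : NNReal) / n) ≠ 0 := by
    simp [div_eq_mul_inv]
    omega
  set v : NNReal := (1 : NNReal) / n with hvdef
  have hvr : (v : ℝ) = 1 / n := by
    simp [hvdef, NNReal.coe_div]
  have hgm : Measurable fun x : ℝ => ENNReal.ofReal (if δ < x ^ 2 then Real.exp (x ^ 2) else 0) := by
    apply Measurable.ennreal_ofReal
    exact Measurable.ite (measurableSet_lt measurable_const (by fun_prop)) (by fun_prop)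
      measurable_const
  rw [gaussianReal_of_var_ne_zero 0 hv,
    lintegral_withDensity_eq_lintegral_mul volume (measurable_gaussianPDF 0 v) hgm]
  set c : ℝ := n * Real.exp ((2 - n / 2) * δ) with hcdef
  have hc0 : 0 < c := by positivity
  have hbd : ∀ x : ℝ, (gaussianPDF 0 v * fun x =>
      ENNReal.ofReal (if δ < x ^ 2 then Real.exp (x ^ 2) else 0)) x
      ≤ ENNReal.ofReal (c * Real.exp (-x ^ 2)) := by
    intro x
    simp only [Pi.mul_apply, gaussianPDF]
    rw [← ENNReal.ofReal_mul (gaussianPDFReal_nonneg 0 v x)]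
    apply ENNReal.ofReal_le_ofReal
    by_cases hx : δ < x ^ 2
    · rw [if_pos hx]
      have hsq : (0:ℝ) ≤ 2 * π * v := by positivity
      set s : ℝ := Real.sqrt (2 * π * v) with hsdef
      have hs0 : 0 < s := Real.sqrt_pos.mpr (by
        rw [hvr]; have := pi_pos; positivity)
      have hs2 : s ^ 2 = 2 * π * v := Real.sq_sqrt hsq
      have hs2' : s ^ 2 = 2 * π / n := by rw [hs2, hvr]; ring
      have hsinv : s⁻¹ ≤ n := by
        rw [inv_le_iff_one_le_mul₀ hs0]
        have h24 : (1:ℝ) ≤ ((n:ℝ) * s) ^ 2 := by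
          rw [mul_pow, hs2']
          rw [show (n:ℝ) ^ 2 * (2 * π / n) = 2 * π * n by field_simp]
          have hn4 : (4:ℝ) ≤ n := by exact_mod_cast hn
          nlinarith [pi_gt_three]
        nlinarith [mul_pos hn0 hs0]
      have hpdf : gaussianPDFReal 0 v x = s⁻¹ * Real.exp (-(n / 2) * x ^ 2) := by
        rw [gaussianPDFReal]
        congr 1
        rw [sub_zero]
        congr 1
        rw [hvr]
        field_simp
      rw [hpdf]
      have hexp : s⁻¹ * Real.exp (-(n / 2) * x ^ 2) * Real.exp (x ^ 2)
          = s⁻¹ * (Real.exp ((2 - n / 2) * x ^ 2) * Real.exp (-x ^ 2)) := by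
        rw [mul_assoc, ← Real.exp_add, ← Real.exp_add]
        congr 1
        ring
      rw [hexp]
      have h1 : Real.exp ((2 - n / 2) * x ^ 2) ≤ Real.exp ((2 - n / 2) * δ) := by
        apply Real.exp_le_exp.mpr
        apply mul_le_mul_of_nonpos_left hx.le
        have : (4:ℝ) ≤ n := by exact_mod_cast hn
        linarith
      calc s⁻¹ * (Real.exp ((2 - n / 2) * x ^ 2) * Real.exp (-x ^ 2))
          ≤ n * (Real.exp ((2 - n / 2) * δ) * Real.exp (-x ^ 2)) := by
            apply mul_le_mul hsinv _ (by positivity) hn0.le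
            exact mul_le_mul_of_nonneg_right h1 (Real.exp_nonneg _)
        _ = c * Real.exp (-x ^ 2) := by rw [hcdef]; ring
    · rw [if_neg hx, mul_zero]
      positivity
  calc ∫⁻ x, (gaussianPDF 0 v * fun x =>
        ENNReal.ofReal (if δ < x ^ 2 then Real.exp (x ^ 2) else 0)) x
      ≤ ∫⁻ x, ENNReal.ofReal (c * Real.exp (-x ^ 2)) := lintegral_mono hbd
    _ = ENNReal.ofReal (∫ x, c * Real.exp (-x ^ 2)) := by
        rw [ofReal_integral_eq_lintegral_ofReal]
        · have := integrable_exp_neg_mul_sq (one_pos (α := ℝ))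
          simp only [neg_one_mul] at this
          exact this.const_mul c
        · filter_upwards with x; positivity
    _ ≤ ENNReal.ofReal (2 * n * Real.exp ((2 - n / 2) * δ)) := by
        apply ENNReal.ofReal_le_ofReal
        rw [integral_const_mul]
        have h2 : ∫ x : ℝ, Real.exp (-x ^ 2) = Real.sqrt π := by
          have := integral_gaussian 1
          simpa using this
        rw [h2]
        have hsp : Real.sqrt π ≤ 2 := by
          rw [show (2:ℝ) = Real.sqrt 4 by
            rw [show (4:ℝ) = 2 ^ 2 by norm_num, Real.sqrt_sq (by norm_num)]]
          exact Real.sqrt_le_sqrt (by linarith [pi_le_four])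
        calc c * Real.sqrt π ≤ c * 2 := by nlinarith
          _ = 2 * n * Real.exp ((2 - n / 2) * δ) := by rw [hcdef]; ring


lemma gauss_g_int (n : ℕ) (hn : 4 ≤ n) (δ : ℝ) (hδ0 : 0 < δ) :
    Integrable (fun x => if δ < x ^ 2 then Real.exp (x ^ 2) else 0)
      (gaussianReal 0 ((1 : NNReal) / n)) ∧
    ∫ x, (if δ < x ^ 2 then Real.exp (x ^ 2) else 0) ∂(gaussianReal 0 ((1 : NNReal) / n))
      ≤ 2 * n * Real.exp ((2 - n / 2) * δ) := by
  set ν := gaussianReal 0 ((1 : NNReal) / n) with hν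
  set g : ℝ → ℝ := fun x => if δ < x ^ 2 then Real.exp (x ^ 2) else 0 with hg
  have hgm : Measurable g :=
    Measurable.ite (measurableSet_lt measurable_const (by fun_prop)) (by fun_prop)
      measurable_const
  have hgnn : ∀ x, 0 ≤ g x := by
    intro x; rw [hg]; dsimp only; split <;> positivity
  have hlt := gauss_g_lintegral n hn δ hδ0
  have hint : Integrable g ν := by
    refine ⟨hgm.aestronglyMeasurable, ?_⟩
    rw [hasFiniteIntegral_iff_ofReal (ae_of_all _ hgnn)]
    exact lt_of_le_of_lt hlt ENNReal.ofReal_lt_top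
  refine ⟨hint, ?_⟩
  rw [show (∫ x, (if δ < x ^ 2 then Real.exp (x ^ 2) else 0) ∂ν) = ∫ x, g x ∂ν from rfl,
    integral_eq_lintegral_of_nonneg_ae (ae_of_all _ hgnn) hgm.aestronglyMeasurable]
  exact ENNReal.toReal_le_of_le_ofReal (by positivity) hlt

lemma eventually_tail (ε : ℝ) (hε0 : 0 < ε) (hε1 : ε < 1) :
    ∀ᶠ n : ℕ in atTop,
      2 * (n : ℝ) ^ (2 : ℝ) * Real.exp 2 * Real.exp (-(n : ℝ) ^ ε / 2) ≤ (n : ℝ) ^ (ε - 1) := by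
  have h1 : Tendsto (fun n : ℕ => (n : ℝ) ^ ε) atTop atTop :=
    (tendsto_rpow_atTop hε0).comp tendsto_natCast_atTop_atTop
  have h2 := tendsto_rpow_mul_exp_neg_mul_atTop_nhds_zero ((3 - ε) / ε) (1 / 2) (by norm_num)
  have h3 := h2.comp h1
  have hc : (0 : ℝ) < 1 / (2 * Real.exp 2) := by positivity
  filter_upwards [h3.eventually (eventually_lt_nhds hc), eventually_ge_atTop 1] with n hsm hn1
  have hn0 : (0 : ℝ) < n := by exact_mod_cast hn1
  have hre : ((n : ℝ) ^ ε) ^ ((3 - ε) / ε) = (n : ℝ) ^ (3 - ε) := by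
    rw [← Real.rpow_mul hn0.le]
    congr 1
    field_simp
  have hsm' : (n : ℝ) ^ (3 - ε) * Real.exp (-(n : ℝ) ^ ε / 2) < 1 / (2 * Real.exp 2) := by
    have := hsm
    simp only [Function.comp_apply] at this
    rw [hre] at this
    convert this using 3
    · rfl
    · ring
  have hδ0 : (0 : ℝ) < (n : ℝ) ^ (ε - 1) := Real.rpow_pos_of_pos hn0 _
  have hsplit : (n : ℝ) ^ (2 : ℝ) = (n : ℝ) ^ (3 - ε) * (n : ℝ) ^ (ε - 1) := by
    rw [← Real.rpow_add hn0]
    norm_num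
  rw [hsplit]
  set A : ℝ := (n : ℝ) ^ (3 - ε)
  set B : ℝ := (n : ℝ) ^ (ε - 1)
  set E : ℝ := Real.exp (-(n : ℝ) ^ ε / 2)
  have hB0 : (0 : ℝ) < 2 * Real.exp 2 * B := by positivity
  have key := mul_lt_mul_of_pos_right hsm' hB0
  have hcan : (1 / (2 * Real.exp 2)) * (2 * Real.exp 2 * B) = B := by
    field_simp
  have hring : 2 * (A * B) * Real.exp 2 * E = A * E * (2 * Real.exp 2 * B) := by ring
  rw [hring]
  linarith [key, hcan.le]

theorem gaussian_max_exp_sq_expectation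
    {Ω : Type*} [MeasurableSpace Ω] (P : Measure Ω) [IsProbabilityMeasure P]
    (ε : ℝ) (hε0 : 0 < ε) (hε1 : ε < 1) :
    ∃ C : ℝ, ∃ N : ℕ, ∀ n : ℕ, N ≤ n → ∀ Z : Fin n → Ω → ℝ,
      iIndepFun Z P →
      (∀ i, Measure.map (Z i) P = gaussianReal 0 ((1 : NNReal) / n)) →
      (∫ ω, Real.exp ((⨆ i, Z i ω) ^ 2) ∂P) ≤ 1 + C * (n : ℝ) ^ (-(1 - ε)) := by
  obtain ⟨N₀, hN₀⟩ := (eventually_tail ε hε0 hε1).exists_forall_of_atTop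
  refine ⟨4, max N₀ 4, ?_⟩
  intro n hn Z _ hmap
  have hn4 : 4 ≤ n := le_trans (le_max_right _ _) hn
  have hnN₀ : N₀ ≤ n := le_trans (le_max_left _ _) hn
  have hn0 : (0 : ℝ) < n := by
    have : (4 : ℝ) ≤ n := by exact_mod_cast hn4
    linarith
  haveI : Nonempty (Fin n) := ⟨⟨0, by omega⟩⟩
  set δ : ℝ := (n : ℝ) ^ (ε - 1) with hδ
  have hδ0 : 0 < δ := Real.rpow_pos_of_pos hn0 _
  have hδ1 : δ ≤ 1 := Real.rpow_le_one_of_one_le_of_nonpos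
    (by exact_mod_cast Nat.one_le_iff_ne_zero.mpr (by omega)) (by linarith)
  set g : ℝ → ℝ := fun x => if δ < x ^ 2 then Real.exp (x ^ 2) else 0 with hg
  have hgm : Measurable g :=
    Measurable.ite (measurableSet_lt measurable_const (by fun_prop)) (by fun_prop)
      measurable_const
  have hgnn : ∀ x, 0 ≤ g x := by
    intro x; rw [hg]; dsimp only; split <;> positivity
  obtain ⟨hGint, hGbd⟩ := gauss_g_int n hn4 δ hδ0
  have hZae : ∀ i, AEMeasurable (Z i) P := by
    intro i
    by_contra h
    have h2 := hmap i
    rw [Measure.map_of_not_aemeasurable h] at h2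
    have h3 : (gaussianReal 0 ((1 : NNReal) / n)) Set.univ = 1 := measure_univ
    rw [← h2] at h3
    simp at h3
  have hgi : ∀ i, Integrable (fun ω => g (Z i ω)) P := by
    intro i
    have h1 : Integrable g (Measure.map (Z i) P) := by rw [hmap i]; exact hGint
    exact (integrable_map_measure hgm.aestronglyMeasurable (hZae i)).mp h1
  have hIeq : ∀ i, ∫ ω, g (Z i ω) ∂P = ∫ x, g x ∂(gaussianReal 0 ((1 : NNReal) / n)) := by
    intro i
    rw [← hmap i, integral_map (hZae i) hgm.aestronglyMeasurable]
  have hpt : ∀ ω, Real.exp ((⨆ i, Z i ω) ^ 2) ≤ Real.exp δ + ∑ i, g (Z i ω) := by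
    intro ω
    obtain ⟨j, hj⟩ := Finite.exists_max (fun i => Z i ω)
    have hsup : (⨆ i, Z i ω) = Z j ω :=
      le_antisymm (ciSup_le hj) (le_ciSup (f := fun i => Z i ω) (Finite.bddAbove_range _) j)
    obtain ⟨k, hk⟩ := Finite.exists_max (fun i => (Z i ω) ^ 2)
    rw [hsup]
    have hjk : (Z j ω) ^ 2 ≤ (Z k ω) ^ 2 := hk j
    by_cases h : (Z k ω) ^ 2 ≤ δ
    · have h1 : Real.exp ((Z j ω) ^ 2) ≤ Real.exp δ :=
        Real.exp_le_exp.mpr (hjk.trans h)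
      have h2 : (0 : ℝ) ≤ ∑ i, g (Z i ω) :=
        Finset.sum_nonneg fun i _ => hgnn _
      linarith
    · push_neg at h
      have h1 : g (Z k ω) = Real.exp ((Z k ω) ^ 2) := by rw [hg]; dsimp only; rw [if_pos h]
      have h2 : g (Z k ω) ≤ ∑ i, g (Z i ω) :=
        Finset.single_le_sum (fun i _ => hgnn (Z i ω)) (Finset.mem_univ k)
      have h3 : Real.exp ((Z j ω) ^ 2) ≤ Real.exp ((Z k ω) ^ 2) := Real.exp_le_exp.mpr hjk
      have h4 : (0 : ℝ) ≤ Real.exp δ := (Real.exp_pos _).le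
      linarith
  have hRint : Integrable (fun ω => Real.exp δ + ∑ i, g (Z i ω)) P :=
    (integrable_const _).add (integrable_finset_sum _ fun i _ => hgi i)
  have hmain : (∫ ω, Real.exp ((⨆ i, Z i ω) ^ 2) ∂P)
      ≤ Real.exp δ + n * ∫ x, g x ∂(gaussianReal 0 ((1 : NNReal) / n)) := by
    calc (∫ ω, Real.exp ((⨆ i, Z i ω) ^ 2) ∂P)
        ≤ ∫ ω, (Real.exp δ + ∑ i, g (Z i ω)) ∂P :=
          integral_mono_of_nonneg (ae_of_all _ fun ω => (Real.exp_pos _).le) hRint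
            (ae_of_all _ hpt)
      _ = Real.exp δ + ∑ i, ∫ ω, g (Z i ω) ∂P := by
          rw [integral_add (integrable_const _) (integrable_finset_sum _ fun i _ => hgi i),
            integral_const, integral_finset_sum _ fun i _ => hgi i]
          simp [measure_univ]
      _ = Real.exp δ + n * ∫ x, g x ∂(gaussianReal 0 ((1 : NNReal) / n)) := by
          simp only [hIeq, Finset.sum_const, Finset.card_univ, Fintype.card_fin, nsmul_eq_mul]
  have hexpδ : Real.exp δ ≤ 1 + 3 * δ := by
    have h1 : (1 - δ) * Real.exp δ ≤ 1 := by
      have h := Real.add_one_le_exp (-δ)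
      rw [Real.exp_neg] at h
      calc (1 - δ) * Real.exp δ ≤ (Real.exp δ)⁻¹ * Real.exp δ :=
            mul_le_mul_of_nonneg_right (by linarith) (Real.exp_pos _).le
        _ = 1 := inv_mul_cancel₀ (Real.exp_ne_zero _)
    have h2 : Real.exp δ ≤ 3 := by
      calc Real.exp δ ≤ Real.exp 1 := Real.exp_le_exp.mpr hδ1
        _ ≤ 3 := by nlinarith [Real.exp_one_lt_d9]
    nlinarith
  have htail : (n : ℝ) * ∫ x, g x ∂(gaussianReal 0 ((1 : NNReal) / n)) ≤ δ := by
    have hnδ : (n : ℝ) * δ = (n : ℝ) ^ ε := by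
      rw [hδ]
      nth_rewrite 1 [show (n : ℝ) = (n : ℝ) ^ (1 : ℝ) from (Real.rpow_one _).symm]
      rw [← Real.rpow_add hn0]
      norm_num
    have hsq : ((n : ℕ) : ℝ) * (2 * n * Real.exp ((2 - n / 2) * δ))
        ≤ 2 * (n : ℝ) ^ (2 : ℝ) * Real.exp 2 * Real.exp (-(n : ℝ) ^ ε / 2) := by
      have he : Real.exp ((2 - (n : ℝ) / 2) * δ)
          = Real.exp (2 * δ) * Real.exp (-((n : ℝ) * δ) / 2) := by
        rw [← Real.exp_add]; congr 1; ring
      rw [he, hnδ]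
      have h2δ : Real.exp (2 * δ) ≤ Real.exp 2 := Real.exp_le_exp.mpr (by linarith)
      have hpw : (n : ℝ) * (2 * n) = 2 * (n : ℝ) ^ (2 : ℝ) := by
        rw [Real.rpow_two]; ring
      calc (n : ℝ) * (2 * n * (Real.exp (2 * δ) * Real.exp (-(n : ℝ) ^ ε / 2)))
          ≤ (n : ℝ) * (2 * n * (Real.exp 2 * Real.exp (-(n : ℝ) ^ ε / 2))) := by
            apply mul_le_mul_of_nonneg_left _ hn0.le
            apply mul_le_mul_of_nonneg_left _ (by positivity)
            exact mul_le_mul_of_nonneg_right h2δ (Real.exp_pos _).le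
        _ = 2 * (n : ℝ) ^ (2 : ℝ) * Real.exp 2 * Real.exp (-(n : ℝ) ^ ε / 2) := by
            rw [Real.rpow_two]; ring
    calc (n : ℝ) * ∫ x, g x ∂(gaussianReal 0 ((1 : NNReal) / n))
        ≤ (n : ℝ) * (2 * n * Real.exp ((2 - n / 2) * δ)) :=
          mul_le_mul_of_nonneg_left hGbd hn0.le
      _ ≤ 2 * (n : ℝ) ^ (2 : ℝ) * Real.exp 2 * Real.exp (-(n : ℝ) ^ ε / 2) := hsq
      _ ≤ (n : ℝ) ^ (ε - 1) := hN₀ n hnN₀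
      _ = δ := hδ.symm
  have hfin : (∫ ω, Real.exp ((⨆ i, Z i ω) ^ 2) ∂P) ≤ 1 + 4 * δ := by linarith
  calc (∫ ω, Real.exp ((⨆ i, Z i ω) ^ 2) ∂P) ≤ 1 + 4 * δ := hfin
    _ = 1 + 4 * (n : ℝ) ^ (-(1 - ε)) := by rw [hδ, neg_sub]
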